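/- The set A_β is nonempty for β ∈ (0,1/2): there exist λ > 0 and a function v : T_m → ℝ with 0 < c ≤ v ≤ C for some constants c, C, such that Δ_β v(x) + λ v(x) ≤ 0 for all x ∈ T_m. In fact, v(x) = 1 + (|x| + a) p_β^{|x|} works for a sufficiently large, and then Δ_β v(x) ≤ 2β - 1 < 0 for all x ∈ T_m. -/

import Mathlib

open Filter Finset Topology

/-- The weight `p_β`: `1` if `β = 0`, and `β/(1-β)` otherwise. -/
noncomputable def pB (β : ℝ) : ℝ := if β = 0 then 1 else β / (1 - β)

/-- Vertices of the regular `m`-branching tree are finite sequences over `Fin m`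
(the root is `[]`, the successors of `x` are `i :: x`, the predecessor of `a :: t` is `t`,
and the level `|x|` is the list length).  The `β`-Laplacian on the tree. -/
noncomputable def lapB (m : ℕ) (β : ℝ) (u : List (Fin m) → ℝ) : List (Fin m) → ℝ
  | [] => (∑ i : Fin m, u [i]) / m - u []
  | a :: t =>
      (β * u t + (1 - β) * (∑ i : Fin m, u (i :: a :: t)) / m - u (a :: t)) *
        pB β ^ (-((a :: t).length : ℤ))

/-- A branch: an infinite path starting at the root, following successors. -/
def IsBranch (m : ℕ) (b : ℕ → List (Fin m)) : Prop :=
  b 0 = [] ∧ ∀ n, ∃ i : Fin m, b (n + 1) = i :: b n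

/-- Homogeneous Dirichlet boundary condition: `u → 0` along every branch. -/
def ZeroOnBoundary (m : ℕ) (u : List (Fin m) → ℝ) : Prop :=
  ∀ b : ℕ → List (Fin m), IsBranch m b → Tendsto (fun n => u (b n)) atTop (𝓝 0)

/-- `lam` is a principal eigenvalue of `Δ_β`: it is positive and admits a bounded
nonnegative nontrivial eigenfunction vanishing on the boundary. -/
def IsPrincipalEigenvalue (m : ℕ) (β lam : ℝ) : Prop :=
  0 < lam ∧ ∃ u : List (Fin m) → ℝ,
    (∃ M, ∀ x, |u x| ≤ M) ∧ (∀ x, 0 ≤ u x) ∧ u ≠ 0 ∧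
    (∀ x, -lapB m β u x = lam * u x) ∧ ZeroOnBoundary m u

/-- Membership in the set `A_β`. -/
def memA (m : ℕ) (β lam : ℝ) : Prop :=
  0 < lam ∧ ∃ v : List (Fin m) → ℝ, ∃ c C : ℝ, 0 < c ∧
    (∀ x, c < v x ∧ v x < C) ∧ ∀ x, lapB m β v x + lam * v x ≤ 0

/-- `λ₁(β) = sup A_β`. -/
noncomputable def lam1 (m : ℕ) (β : ℝ) : ℝ := sSup {lam | memA m β lam}

lemma lap_key (m : ℕ) (hm : 2 ≤ m) (β a : ℝ) (hβ0 : 0 < β) (hβ1 : β < 1 / 2)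
    (ha : (pB β + 1 - 2 * β) / (1 - pB β) ≤ a) :
    ∀ x : List (Fin m),
      lapB m β (fun y => 1 + ((y.length : ℝ) + a) * pB β ^ y.length) x ≤ 2 * β - 1 := by
  have h1β : 0 < 1 - β := by linarith
  have hpdef : pB β = β / (1 - β) := by simp [pB, hβ0.ne']
  set p := pB β with hp
  have hp0 : 0 < p := by rw [hpdef]; positivity
  have hp1 : p < 1 := by rw [hpdef, div_lt_one h1β]; linarith
  have hkey : (1 - β) * p = β := by rw [hpdef]; field_simp
  have hm0 : (m : ℝ) ≠ 0 := by
    have : (0:ℕ) < m := by omega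
    exact_mod_cast this.ne'
  have hc2 : ∀ c : ℝ, (m:ℝ) * c * ((1 - β) / m) = c * (1 - β) := fun c => by
    field_simp
  have ha' : p + 1 - 2 * β ≤ a * (1 - p) := (div_le_iff₀ (by linarith)).mp ha
  intro x
  match x with
  | [] =>
    simp only [lapB, List.length_cons, List.length_nil, Finset.sum_const, Finset.card_univ,
      Fintype.card_fin, nsmul_eq_mul, Nat.cast_zero, Nat.cast_one, pow_zero, pow_one]
    rw [mul_div_cancel_left₀ _ hm0]
    push_cast
    nlinarith [ha']
  | i :: t =>
    simp only [lapB, List.length_cons, Finset.sum_const, Finset.card_univ,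
      Fintype.card_fin, nsmul_eq_mul]
    rw [mul_comm (1 - β), mul_div_assoc, hc2]
    set k := t.length with hk
    have hinner : β * (1 + ((k:ℝ) + a) * p ^ k) + (1 + ((k:ℝ) + 1 + 1 + a) * p ^ (k + 1 + 1)) * (1 - β)
        - (1 + ((k:ℝ) + 1 + a) * p ^ (k + 1)) = (2 * β - 1) * p ^ (k + 1) := by
      linear_combination ((-((k:ℝ) + a)) * p ^ k + ((k:ℝ) + 2 + a) * p ^ (k + 1)) * hkey
    have hzp : p ^ (k + 1) * p ^ (-((k + 1 : ℕ) : ℤ)) = 1 := by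
      rw [zpow_neg, zpow_natCast]
      exact mul_inv_cancel₀ (pow_ne_zero _ hp0.ne')
    have : (β * (1 + ((k:ℝ) + a) * p ^ k) + (1 + ((k:ℝ) + 1 + 1 + a) * p ^ (k + 1 + 1)) * (1 - β)
        - (1 + ((k:ℝ) + 1 + a) * p ^ (k + 1))) * p ^ (-((k + 1 : ℕ) : ℤ)) = 2 * β - 1 := by
      rw [hinner, mul_assoc, hzp, mul_one]
    push_cast at this ⊢
    rw [this]

lemma pow_mul_bound (p : ℝ) (hp0 : 0 < p) (hp1 : p < 1) (k : ℕ) :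
    (k : ℝ) * p ^ k ≤ p / (1 - p) := by
  rcases Nat.eq_zero_or_pos k with hk | hk
  · subst hk; simp; exact div_nonneg hp0.le (by linarith)
  · have hx : (0:ℝ) < (1 - p) / p := div_pos (by linarith) hp0
    have hb : 1 + (k:ℝ) * ((1 - p) / p) ≤ (1 + (1 - p) / p) ^ k :=
      one_add_mul_le_pow (by linarith) k
    have h1 : (1 : ℝ) + (1 - p) / p = 1 / p := by field_simp; ring
    have hkx : (0:ℝ) < (k:ℝ) * ((1 - p) / p) := by
      have : (0:ℝ) < (k:ℝ) := by exact_mod_cast hk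
      exact mul_pos this hx
    have h2 : (k:ℝ) * ((1 - p) / p) ≤ (1 / p) ^ k := by
      rw [← h1]; linarith
    have h3 : (1 / p) ^ k = (p ^ k)⁻¹ := by
      rw [one_div, inv_pow]
    have hpk : (0:ℝ) < p ^ k := by positivity
    -- from h2 : k*(1-p)/p ≤ (p^k)⁻¹, multiply by p^k
    have h4 : (k:ℝ) * ((1 - p) / p) * p ^ k ≤ 1 := by
      calc (k:ℝ) * ((1 - p) / p) * p ^ k ≤ (p ^ k)⁻¹ * p ^ k := by
            apply mul_le_mul_of_nonneg_right _ hpk.le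
            rw [← h3]; exact h2
        _ = 1 := inv_mul_cancel₀ hpk.ne'
    rw [le_div_iff₀ (by linarith : (0:ℝ) < 1 - p)]
    calc (k:ℝ) * p ^ k * (1 - p) = (k:ℝ) * ((1 - p) / p) * p ^ k * p := by
          field_simp
      _ ≤ 1 * p := by apply mul_le_mul_of_nonneg_right h4 hp0.le
      _ = p := one_mul p

theorem stmt10 (m : ℕ) (hm : 2 ≤ m) (β : ℝ) (hβ0 : 0 < β) (hβ1 : β < 1 / 2) :
    (∃ lam > (0 : ℝ), ∃ v : List (Fin m) → ℝ, ∃ c C : ℝ, 0 < c ∧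
      (∀ x, c ≤ v x ∧ v x ≤ C) ∧ ∀ x, lapB m β v x + lam * v x ≤ 0) ∧
    (∃ a₀ : ℝ, ∀ a ≥ a₀, ∀ x : List (Fin m),
      lapB m β (fun y => 1 + ((y.length : ℝ) + a) * pB β ^ y.length) x ≤ 2 * β - 1) := by
  have h1β : 0 < 1 - β := by linarith
  have hpdef : pB β = β / (1 - β) := by simp [pB, hβ0.ne']
  set p := pB β with hp
  have hp0 : 0 < p := by rw [hpdef]; positivity
  have hp1 : p < 1 := by rw [hpdef, div_lt_one h1β]; linarith
  set a₀ : ℝ := (p + 1 - 2 * β) / (1 - p) with ha₀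
  constructor
  · -- first part
    set a : ℝ := max a₀ 0 with ha
    have haa : a₀ ≤ a := le_max_left _ _
    have ha0 : 0 ≤ a := le_max_right _ _
    set C : ℝ := 2 + a + p / (1 - p) with hC
    have hCpos : 0 < C := by
      have : 0 < p / (1 - p) := div_pos hp0 (by linarith)
      simp only [hC]; linarith
    set lam : ℝ := (1 - 2 * β) / C with hlam
    have hlampos : 0 < lam := by
      apply div_pos (by linarith) hCpos
    refine ⟨lam, hlampos, fun y => 1 + ((y.length : ℝ) + a) * p ^ y.length, 1, C, one_pos,
      ?_, ?_⟩
    · intro x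
      dsimp only
      set k := x.length with hk
      have hpk0 : (0:ℝ) < p ^ k := by positivity
      have hpk1 : p ^ k ≤ 1 := pow_le_one₀ hp0.le hp1.le
      constructor
      · have : 0 ≤ ((k:ℝ) + a) * p ^ k :=
          mul_nonneg (add_nonneg (Nat.cast_nonneg k) ha0) hpk0.le
        linarith
      · have h1 : (k:ℝ) * p ^ k ≤ p / (1 - p) := pow_mul_bound p hp0 hp1 k
        have h2 : a * p ^ k ≤ a := by nlinarith
        simp only [hC]
        nlinarith
    · intro x
      dsimp only
      have hlap := lap_key m hm β a hβ0 hβ1 haa x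
      have hvC : 1 + ((x.length : ℝ) + a) * p ^ x.length ≤ C := by
        set k := x.length with hk
        have hpk0 : (0:ℝ) < p ^ k := by positivity
        have hpk1 : p ^ k ≤ 1 := pow_le_one₀ hp0.le hp1.le
        have h1 : (k:ℝ) * p ^ k ≤ p / (1 - p) := pow_mul_bound p hp0 hp1 k
        have h2 : a * p ^ k ≤ a := by nlinarith
        simp only [hC]; nlinarith
      have hv0 : 0 ≤ 1 + ((x.length : ℝ) + a) * p ^ x.length := by
        have : (0:ℝ) ≤ ((x.length:ℝ) + a) * p ^ x.length :=
          mul_nonneg (add_nonneg (Nat.cast_nonneg _) ha0) (by positivity)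
        linarith
      have hmul : lam * (1 + ((x.length : ℝ) + a) * p ^ x.length) ≤ lam * C :=
        mul_le_mul_of_nonneg_left hvC hlampos.le
      have hlamC : lam * C = 1 - 2 * β := by
        rw [hlam, div_mul_cancel₀ _ hCpos.ne']
      linarith
  · exact ⟨a₀, fun a haa => lap_key m hm β a hβ0 hβ1 haa⟩
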